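/- Let G be a compact abelian group with dual group Γ, let n ≥ 2 be an integer, and let E ⊆ Γ. Then κ_n(E) = |1 − e^{iα_n(E)}|. -/

import Mathlib

open Complex
open scoped Real

/-- Distance between two real numbers measured modulo `2π`, i.e. as distance
on the circle `ℝ/2πℤ`; it takes values in `[0, π]`. -/
noncomputable def angDist (a b : ℝ) : ℝ := |((a - b : ℝ) : Real.Angle).toReal|

/-- The `n`-th roots of unity in the circle. -/
def nthRoots (n : ℕ) : Set ℂ := {z : ℂ | z ^ n = 1}

/-- The set `𝐙ₙ = {2πj/n : j = 0, 1, ..., n-1}` of angles of `n`-th roots of unity. -/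
noncomputable def Zn (n : ℕ) : Set ℝ := {θ : ℝ | ∃ j : ℕ, j < n ∧ θ = 2 * π * j / n}

/-- `κₙ(E)`: the infimum of `ε ≥ 0` such that every function from `E` into the `n`-th
roots of unity can be approximated within `ε` by a character evaluation. -/
noncomputable def kroneckerConstantN {G : Type*} [CommGroup G] [TopologicalSpace G]
    (n : ℕ) (E : Set (ContinuousMonoidHom G Circle)) : ℝ :=
  sInf {ε : ℝ | 0 ≤ ε ∧ ∀ φ : ContinuousMonoidHom G Circle → ℂ,
    (∀ γ ∈ E, φ γ ∈ nthRoots n) →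
      ∃ x : G, ∀ γ ∈ E, ‖φ γ - (γ x : ℂ)‖ < ε}

/-- `αₙ(E)`: the infimum of `ε ≥ 0` such that every `𝐙ₙ`-valued function on `E` can be
approximated within `ε` (mod `2π`) by the argument of a character evaluation. -/
noncomputable def angularConstantN {G : Type*} [CommGroup G] [TopologicalSpace G]
    (n : ℕ) (E : Set (ContinuousMonoidHom G Circle)) : ℝ :=
  sInf {ε : ℝ | 0 ≤ ε ∧ ∀ φ : ContinuousMonoidHom G Circle → ℝ,
    (∀ γ ∈ E, φ γ ∈ Zn n) →
      ∃ x : G, ∀ γ ∈ E, angDist (φ γ) (Complex.arg (γ x : ℂ)) ≤ ε}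

/-- chord length function -/
noncomputable def Fc (t : ℝ) : ℝ := ‖1 - Complex.exp ((t : ℂ) * Complex.I)‖

lemma Fc_eq (t : ℝ) : Fc t = Real.sqrt (2 - 2 * Real.cos t) := by
  rw [Fc, Complex.exp_mul_I, Complex.norm_def, Complex.normSq_apply]
  simp only [Complex.sub_re, Complex.sub_im, Complex.one_re, Complex.one_im,
    Complex.add_re, Complex.add_im, Complex.mul_re, Complex.mul_im,
    Complex.I_re, Complex.I_im, Complex.cos_ofReal_re, Complex.cos_ofReal_im,
    Complex.sin_ofReal_re, Complex.sin_ofReal_im]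
  congr 1
  have h := Real.sin_sq_add_cos_sq t
  ring_nf
  nlinarith [h]

lemma Fc_nonneg (t : ℝ) : 0 ≤ Fc t := by rw [Fc_eq]; exact Real.sqrt_nonneg _

lemma Fc_le_two (t : ℝ) : Fc t ≤ 2 := by
  rw [Fc_eq]
  have : (2 : ℝ) = Real.sqrt 4 := by
    rw [show (4:ℝ) = 2^2 by norm_num, Real.sqrt_sq (by norm_num)]
  rw [this]
  apply Real.sqrt_le_sqrt
  nlinarith [Real.neg_one_le_cos t]

lemma Fc_mono {s t : ℝ} (hs : 0 ≤ s) (hst : s ≤ t) (ht : t ≤ π) : Fc s ≤ Fc t := by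
  rw [Fc_eq, Fc_eq]
  apply Real.sqrt_le_sqrt
  have := Real.strictAntiOn_cos.antitoneOn (a := s) (b := t)
    ⟨hs, hst.trans ht⟩ ⟨hs.trans hst, ht⟩ hst
  linarith

lemma Fc_surj {y : ℝ} (hy0 : 0 ≤ y) (hy2 : y ≤ 2) :
    ∃ t, 0 ≤ t ∧ t ≤ π ∧ Fc t = y := by
  refine ⟨Real.arccos (1 - y^2/2), Real.arccos_nonneg _, Real.arccos_le_pi _, ?_⟩
  rw [Fc_eq, Real.cos_arccos (by nlinarith) (by nlinarith)]
  rw [show 2 - 2 * (1 - y^2/2) = y^2 by ring, Real.sqrt_sq hy0]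

lemma angDist_nonneg (a b : ℝ) : 0 ≤ angDist a b := abs_nonneg _

lemma angDist_le_pi (a b : ℝ) : angDist a b ≤ π := Real.Angle.abs_toReal_le_pi _

lemma cos_angDist (a b : ℝ) : Real.cos (angDist a b) = Real.cos (a - b) := by
  rw [angDist, Real.cos_abs]
  have : Real.Angle.cos ((((a - b : ℝ)) : Real.Angle).toReal : Real.Angle)
      = Real.Angle.cos (((a - b : ℝ)) : Real.Angle) := by
    rw [Real.Angle.coe_toReal]
  rwa [Real.Angle.cos_coe, Real.Angle.cos_coe] at this

/-- key chord identity -/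
lemma chord (a b : ℝ) :
    ‖Complex.exp ((a : ℂ) * Complex.I) - Complex.exp ((b : ℂ) * Complex.I)‖
      = Fc (angDist a b) := by
  have h1 : Complex.exp ((a : ℂ) * Complex.I) - Complex.exp ((b : ℂ) * Complex.I)
      = Complex.exp ((b : ℂ) * Complex.I) * (Complex.exp (((a - b : ℝ) : ℂ) * Complex.I) - 1) := by
    rw [mul_sub, mul_one, ← Complex.exp_add]
    push_cast
    ring_nf
  rw [h1, norm_mul, Complex.norm_exp_ofReal_mul_I, one_mul, norm_sub_rev,
    ← Fc, Fc_eq, Fc_eq, cos_angDist]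

lemma mem_circle_exp (z : Circle) :
    Complex.exp ((Complex.arg (z : ℂ) : ℂ) * Complex.I) = (z : ℂ) := by
  have := Complex.norm_mul_exp_arg_mul_I (z : ℂ)
  rwa [Circle.norm_coe, Complex.ofReal_one, one_mul] at this

lemma Zn_exp_mem {n : ℕ} (hn : 2 ≤ n) {θ : ℝ} (hθ : θ ∈ Zn n) :
    Complex.exp ((θ : ℂ) * Complex.I) ∈ nthRoots n := by
  obtain ⟨j, hj, rfl⟩ := hθ
  show _ ^ n = 1
  rw [← Complex.exp_nat_mul]
  have hn0 : (n : ℂ) ≠ 0 := Nat.cast_ne_zero.mpr (by omega)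
  have : (n : ℂ) * ((((2 * π * j / n : ℝ)) : ℂ) * Complex.I) = ((j : ℤ) : ℂ) * (2 * π * Complex.I) := by
    push_cast
    field_simp
  rw [this, Complex.exp_int_mul_two_pi_mul_I (j : ℤ)]

lemma roots_exists_angle {n : ℕ} (hn : 2 ≤ n) {z : ℂ} (hz : z ∈ nthRoots n) :
    ∃ θ ∈ Zn n, Complex.exp ((θ : ℂ) * Complex.I) = z := by
  have hn0 : n ≠ 0 := by omega
  have : NeZero n := ⟨hn0⟩
  obtain ⟨j, hj, hjz⟩ := (Complex.isPrimitiveRoot_exp n hn0).eq_pow_of_pow_eq_one hz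
  refine ⟨2 * π * j / n, ⟨j, hj, rfl⟩, ?_⟩
  rw [← hjz, ← Complex.exp_nat_mul]
  congr 1
  have hn0' : (n : ℂ) ≠ 0 := Nat.cast_ne_zero.mpr (by omega)
  push_cast
  ring

theorem stmt3 {G : Type*} [CommGroup G] [TopologicalSpace G] [IsTopologicalGroup G]
    [CompactSpace G] (n : ℕ) (hn : 2 ≤ n) (E : Set (ContinuousMonoidHom G Circle)) :
    kroneckerConstantN n E
      = ‖1 - Complex.exp ((angularConstantN n E : ℂ) * Complex.I)‖ := by
  classical
  set A : Set ℝ := {ε : ℝ | 0 ≤ ε ∧ ∀ φ : ContinuousMonoidHom G Circle → ℝ,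
    (∀ γ ∈ E, φ γ ∈ Zn n) →
      ∃ x : G, ∀ γ ∈ E, angDist (φ γ) (Complex.arg (γ x : ℂ)) ≤ ε} with hAdef
  set K : Set ℝ := {ε : ℝ | 0 ≤ ε ∧ ∀ φ : ContinuousMonoidHom G Circle → ℂ,
    (∀ γ ∈ E, φ γ ∈ nthRoots n) →
      ∃ x : G, ∀ γ ∈ E, ‖φ γ - (γ x : ℂ)‖ < ε} with hKdef
  have hkro : kroneckerConstantN n E = sInf K := rfl
  have hang : angularConstantN n E = sInf A := rfl
  set α : ℝ := angularConstantN n E with hα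
  show sInf K = Fc α
  -- basic facts about A
  have hAlb : ∀ x ∈ A, (0:ℝ) ≤ x := fun x hx => hx.1
  have hKlb : ∀ x ∈ K, (0:ℝ) ≤ x := fun x hx => hx.1
  have hπA : π ∈ A :=
    ⟨Real.pi_nonneg, fun φ _ => ⟨1, fun γ _ => angDist_le_pi _ _⟩⟩
  have hAne : A.Nonempty := ⟨π, hπA⟩
  have hα0 : 0 ≤ α := le_csInf hAne hAlb
  have hαπ : α ≤ π := csInf_le ⟨0, hAlb⟩ hπA
  -- A is upward closed
  have hAup : ∀ a ∈ A, ∀ b, a ≤ b → b ∈ A := by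
    rintro a ⟨ha0, ha⟩ b hab
    refine ⟨ha0.trans hab, fun φ hφ => ?_⟩
    obtain ⟨x, hx⟩ := ha φ hφ
    exact ⟨x, fun γ hγ => (hx γ hγ).trans hab⟩
  -- every root of unity has modulus one
  have habs1 : ∀ z ∈ nthRoots n, ‖z‖ = 1 := by
    intro z hz
    exact Complex.norm_eq_one_of_pow_eq_one hz (by omega)
  -- 3 ∈ K
  have h3K : (3:ℝ) ∈ K := by
    refine ⟨by norm_num, fun φ hφ => ⟨1, fun γ hγ => ?_⟩⟩
    calc ‖φ γ - (γ 1 : ℂ)‖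
        ≤ ‖φ γ‖ + ‖(γ 1 : ℂ)‖ := by
          simpa using norm_sub_le (φ γ) ((γ 1 : ℂ))
      _ = 2 := by rw [habs1 _ (hφ γ hγ), Circle.norm_coe]; norm_num
      _ < 3 := by norm_num
  have hKne : K.Nonempty := ⟨3, h3K⟩
  apply le_antisymm
  · -- sInf K ≤ Fc α
    apply le_of_forall_gt_imp_ge_of_dense
    intro η hη
    apply csInf_le ⟨0, hKlb⟩
    refine ⟨(Fc_nonneg α).trans hη.le, ?_⟩
    intro φ hφ
    choose θf hθZ hθe using fun γ (h : φ γ ∈ nthRoots n) => roots_exists_angle hn h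
    set ψ : ContinuousMonoidHom G Circle → ℝ :=
      fun γ => if h : φ γ ∈ nthRoots n then θf γ h else 0 with hψdef
    have hψZ : ∀ γ ∈ E, ψ γ ∈ Zn n := by
      intro γ hγ
      simp only [hψdef, dif_pos (hφ γ hγ)]
      exact hθZ γ (hφ γ hγ)
    have hψe : ∀ γ ∈ E, Complex.exp ((ψ γ : ℂ) * Complex.I) = φ γ := by
      intro γ hγ
      simp only [hψdef, dif_pos (hφ γ hγ)]
      exact hθe γ (hφ γ hγ)
    set η' : ℝ := (Fc α + η)/2 with hη'def
    have hη'1 : Fc α < η' := by rw [hη'def]; linarith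
    have hη'2 : η' < η := by rw [hη'def]; linarith
    by_cases hcase : η' ≤ 2
    · obtain ⟨t, ht0, htπ, htF⟩ := Fc_surj ((Fc_nonneg α).trans hη'1.le) hcase
      have hαt : α < t := by
        by_contra hle
        push_neg at hle
        have := Fc_mono ht0 hle hαπ
        rw [htF] at this
        linarith
      have htA : t ∈ A := by
        obtain ⟨a, haA, hat⟩ := exists_lt_of_csInf_lt hAne (show sInf A < t from hαt)
        exact hAup a haA t hat.le
      obtain ⟨x, hx⟩ := htA.2 ψ hψZ
      refine ⟨x, fun γ hγ => ?_⟩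
      have hd := hx γ hγ
      have hchord := chord (ψ γ) (Complex.arg ((γ x : ℂ)))
      rw [hψe γ hγ, mem_circle_exp] at hchord
      rw [hchord]
      calc Fc (angDist (ψ γ) (Complex.arg ((γ x : ℂ))))
          ≤ Fc t := Fc_mono (angDist_nonneg _ _) hd htπ
        _ = η' := htF
        _ < η := hη'2
    · push_neg at hcase
      refine ⟨1, fun γ hγ => ?_⟩
      calc ‖φ γ - (γ 1 : ℂ)‖
          ≤ ‖φ γ‖ + ‖(γ 1 : ℂ)‖ := by
            simpa using norm_sub_le (φ γ) ((γ 1 : ℂ))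
        _ = 2 := by rw [habs1 _ (hφ γ hγ), Circle.norm_coe]; norm_num
        _ < η' := hcase
        _ < η := hη'2
  · -- Fc α ≤ sInf K
    apply le_csInf hKne
    intro ε hεK
    rcases le_or_gt ε 2 with hε2 | hε2
    · obtain ⟨t, ht0, htπ, htF⟩ := Fc_surj hεK.1 hε2
      have htA : t ∈ A := by
        refine ⟨ht0, fun ψ hψ => ?_⟩
        have hφ : ∀ γ ∈ E, Complex.exp ((ψ γ : ℂ) * Complex.I) ∈ nthRoots n :=
          fun γ hγ => Zn_exp_mem hn (hψ γ hγ)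
        obtain ⟨x, hx⟩ := hεK.2 (fun γ => Complex.exp ((ψ γ : ℂ) * Complex.I)) hφ
        refine ⟨x, fun γ hγ => ?_⟩
        have h1 := hx γ hγ
        have h2 : Fc (angDist (ψ γ) (Complex.arg ((γ x : ℂ)))) < ε := by
          rw [← chord, mem_circle_exp]
          exact h1
        by_contra hgt
        push_neg at hgt
        have := Fc_mono ht0 hgt.le (angDist_le_pi _ _)
        rw [htF] at this
        linarith
      have hαt : α ≤ t := csInf_le ⟨0, hAlb⟩ htA
      have := Fc_mono hα0 hαt htπ
      rw [htF] at this
      exact this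
    · have := Fc_le_two α
      linarith
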